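/- Let n ≥ 1, let a : Fin n → ℕ satisfy a i ≥ 2 for every i, and let f(z) = ∑ i, (z i)^(a i) on EuclideanSpace ℂ (Fin n). Let B = {z : ‖z‖ < 1} be the open unit ball and V = f⁻¹(0). Then the map φ : B ∖ V → Metric.sphere (0:ℂ) 1 defined by φ(z) = f(z)/‖f(z)‖ is the projection of a topological fiber bundle: there exist a topological space F and, for every point b of the unit circle, a trivialization of φ with fiber F whose base set contains b. -/

import Mathlib

/-- The Pham–Brieskorn polynomial `z ↦ ∑ i, (z i) ^ (a i)`. -/
noncomputable def pbPoly (n : ℕ) (a : Fin n → ℕ) (z : EuclideanSpace ℂ (Fin n)) : ℂ :=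
  ∑ i, z i ^ a i

/-- The open unit ball `B` in `EuclideanSpace ℂ (Fin n)`. -/
def pbBall (n : ℕ) : Set (EuclideanSpace ℂ (Fin n)) := {z | ‖z‖ < 1}

/-- The zero locus `V = f⁻¹(0)` of the Pham–Brieskorn polynomial. -/
def pbZeroLocus (n : ℕ) (a : Fin n → ℕ) : Set (EuclideanSpace ℂ (Fin n)) :=
  {z | pbPoly n a z = 0}

/-- The global Milnor map `φ : B ∖ V → S¹`, `φ z = f z / ‖f z‖`. -/
noncomputable def pbBallMilnorMap (n : ℕ) (a : Fin n → ℕ)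
    (z : (pbBall n \ pbZeroLocus n a : Set (EuclideanSpace ℂ (Fin n)))) :
    Metric.sphere (0 : ℂ) 1 :=
  ⟨pbPoly n a z.1 / (‖pbPoly n a z.1‖ : ℂ), by
    have hz : pbPoly n a z.1 ≠ 0 := z.2.2
    simp [mem_sphere_zero_iff_norm, norm_div, div_self (norm_ne_zero_iff.mpr hz)]⟩

namespace PBaux

open Complex

variable (n : ℕ) (a : Fin n → ℕ)

/-- lifted circle action on the ambient space -/
noncomputable def actC (θ : ℝ) (z : EuclideanSpace ℂ (Fin n)) : EuclideanSpace ℂ (Fin n) :=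
  WithLp.toLp 2 (fun i => Complex.exp (((θ / (a i : ℝ) : ℝ) : ℂ) * Complex.I) * z i)

lemma actC_apply (θ : ℝ) (z : EuclideanSpace ℂ (Fin n)) (i : Fin n) :
    actC n a θ z i = Complex.exp (((θ / (a i : ℝ) : ℝ) : ℂ) * Complex.I) * z i := rfl

lemma norm_actC (θ : ℝ) (z : EuclideanSpace ℂ (Fin n)) : ‖actC n a θ z‖ = ‖z‖ := by
  rw [EuclideanSpace.norm_eq, EuclideanSpace.norm_eq]
  congr 1
  refine Finset.sum_congr rfl fun i _ => ?_
  rw [actC_apply, norm_mul, Complex.norm_exp_ofReal_mul_I, one_mul]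

lemma pbPoly_actC (ha : ∀ i, 2 ≤ a i) (θ : ℝ) (z : EuclideanSpace ℂ (Fin n)) :
    pbPoly n a (actC n a θ z) = Complex.exp ((θ : ℂ) * Complex.I) * pbPoly n a z := by
  unfold pbPoly
  rw [Finset.mul_sum]
  refine Finset.sum_congr rfl fun i _ => ?_
  rw [actC_apply, mul_pow, ← Complex.exp_nat_mul]
  congr 2
  have hne : ((a i : ℂ)) ≠ 0 := Nat.cast_ne_zero.mpr (by have := ha i; omega)
  push_cast
  field_simp

lemma actC_mem (ha : ∀ i, 2 ≤ a i) (θ : ℝ) {z : EuclideanSpace ℂ (Fin n)}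
    (hz : z ∈ (pbBall n \ pbZeroLocus n a)) :
    actC n a θ z ∈ (pbBall n \ pbZeroLocus n a) := by
  constructor
  · show ‖actC n a θ z‖ < 1
    rw [norm_actC]; exact hz.1
  · intro h
    have h' : pbPoly n a (actC n a θ z) = 0 := h
    rw [pbPoly_actC n a ha] at h'
    exact hz.2 ((mul_eq_zero.mp h').resolve_left (Complex.exp_ne_zero _))

lemma continuous_actC :
    Continuous (fun p : ℝ × EuclideanSpace ℂ (Fin n) => actC n a p.1 p.2) := by
  have h : Continuous (fun p : ℝ × EuclideanSpace ℂ (Fin n) =>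
      (fun i => Complex.exp (((p.1 / (a i : ℝ) : ℝ) : ℂ) * Complex.I) * p.2 i : Fin n → ℂ)) := by
    refine continuous_pi fun i => Continuous.mul ?_ ?_
    · exact Complex.continuous_exp.comp
        ((Complex.continuous_ofReal.comp (continuous_fst.div_const _)).mul continuous_const)
    · exact (continuous_apply i).comp ((PiLp.continuous_ofLp 2 (fun _ : Fin n => ℂ)).comp continuous_snd)
  exact (PiLp.continuous_toLp 2 (fun _ : Fin n => ℂ)).comp h

/-- the total space -/
abbrev Zt := (pbBall n \ pbZeroLocus n a : Set (EuclideanSpace ℂ (Fin n)))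

noncomputable def actZ (ha : ∀ i, 2 ≤ a i) (θ : ℝ) (z : Zt n a) : Zt n a :=
  ⟨actC n a θ z.1, actC_mem n a ha θ z.2⟩

lemma continuous_actZ (ha : ∀ i, 2 ≤ a i) :
    Continuous (fun p : ℝ × Zt n a => actZ n a ha p.1 p.2) :=
  ((continuous_actC n a).comp
    (continuous_fst.prodMk (continuous_subtype_val.comp continuous_snd))).subtype_mk _

lemma actZ_add (ha : ∀ i, 2 ≤ a i) (s t : ℝ) (z : Zt n a) :
    actZ n a ha s (actZ n a ha t z) = actZ n a ha (s + t) z := by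
  apply Subtype.ext
  ext i
  show Complex.exp (((s / (a i : ℝ) : ℝ) : ℂ) * Complex.I) *
      (Complex.exp (((t / (a i : ℝ) : ℝ) : ℂ) * Complex.I) * z.1 i)
      = Complex.exp ((((s + t) / (a i : ℝ) : ℝ) : ℂ) * Complex.I) * z.1 i
  rw [← mul_assoc, ← Complex.exp_add]
  congr 2
  push_cast
  ring

lemma actZ_zero (ha : ∀ i, 2 ≤ a i) (z : Zt n a) : actZ n a ha 0 z = z := by
  apply Subtype.ext
  ext i
  show Complex.exp ((((0:ℝ) / (a i : ℝ) : ℝ) : ℂ) * Complex.I) * z.1 i = z.1 i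
  norm_num

lemma milnor_coe (z : Zt n a) :
    (pbBallMilnorMap n a z : ℂ) = pbPoly n a z.1 / (‖pbPoly n a z.1‖ : ℂ) := rfl

lemma continuous_milnor : Continuous (pbBallMilnorMap n a) := by
  apply Continuous.subtype_mk
  have hf : Continuous (fun z : Zt n a => pbPoly n a z.1) := by
    unfold pbPoly
    exact continuous_finset_sum _ fun i _ =>
      ((continuous_apply i).comp ((PiLp.continuous_ofLp 2 (fun _ : Fin n => ℂ)).comp continuous_subtype_val)).pow _
  exact hf.div (Complex.continuous_ofReal.comp hf.norm)
    (fun z => Complex.ofReal_ne_zero.mpr (norm_ne_zero_iff.mpr z.2.2))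

lemma milnor_actZ (ha : ∀ i, 2 ≤ a i) (θ : ℝ) (z : Zt n a) :
    (pbBallMilnorMap n a (actZ n a ha θ z) : ℂ) =
      Complex.exp ((θ : ℂ) * Complex.I) * (pbBallMilnorMap n a z : ℂ) := by
  rw [milnor_coe, milnor_coe]
  show pbPoly n a (actC n a θ z.1) / (‖pbPoly n a (actC n a θ z.1)‖ : ℂ) = _
  rw [pbPoly_actC n a ha, norm_mul,
    Complex.norm_exp_ofReal_mul_I, one_mul, mul_div_assoc]

lemma exp_arg (u : ℂ) (hu : ‖u‖ = 1) : Complex.exp ((u.arg : ℂ) * Complex.I) = u := by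
  conv_rhs => rw [← Complex.norm_mul_exp_arg_mul_I u]
  rw [hu]
  simp

lemma sphere_abs (w : Metric.sphere (0 : ℂ) 1) : ‖(w : ℂ)‖ = 1 := by
  have := mem_sphere_zero_iff_norm.mp w.2
  simpa using this

lemma sphere_ne_zero (w : Metric.sphere (0 : ℂ) 1) : (w : ℂ) ≠ 0 := by
  intro h
  have := sphere_abs w
  rw [h] at this
  simp at this

/-- relative angle of `w` with respect to `b` -/
noncomputable def theta (b w : Metric.sphere (0 : ℂ) 1) : ℝ :=
  ((w : ℂ) / (b : ℂ)).arg + (b : ℂ).arg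

lemma exp_theta (b w : Metric.sphere (0 : ℂ) 1) :
    Complex.exp ((theta b w : ℝ) * Complex.I) = (w : ℂ) := by
  unfold theta
  push_cast
  rw [add_mul, Complex.exp_add, exp_arg _ (by rw [norm_div, sphere_abs, sphere_abs]; norm_num),
    exp_arg _ (sphere_abs b), div_mul_cancel₀ _ (sphere_ne_zero b)]

noncomputable def onePt : Metric.sphere (0 : ℂ) 1 := ⟨1, by simp⟩

lemma milnor_shift (ha : ∀ i, 2 ≤ a i) (b : Metric.sphere (0 : ℂ) 1) (z : Zt n a) :
    pbBallMilnorMap n a (actZ n a ha (-(theta b (pbBallMilnorMap n a z))) z) = onePt := by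
  apply Subtype.ext
  rw [milnor_actZ n a ha]
  rw [show ((onePt : Metric.sphere (0:ℂ) 1) : ℂ) = 1 from rfl]
  conv_lhs => rw [← exp_theta b (pbBallMilnorMap n a z)]
  rw [← Complex.exp_add]
  have h : ((-(theta b (pbBallMilnorMap n a z)) : ℝ) : ℂ) * Complex.I +
      ((theta b (pbBallMilnorMap n a z) : ℝ) : ℂ) * Complex.I = 0 := by push_cast; ring
  rw [h, Complex.exp_zero]

/-- the fiber -/
def Fib : Type := {y : Zt n a // pbBallMilnorMap n a y = onePt}

noncomputable instance : TopologicalSpace (Fib n a) := by unfold Fib; infer_instance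

lemma milnor_actZ_fib (ha : ∀ i, 2 ≤ a i) (b w : Metric.sphere (0 : ℂ) 1) (y : Fib n a) :
    pbBallMilnorMap n a (actZ n a ha (theta b w) y.1) = w := by
  apply Subtype.ext
  rw [milnor_actZ n a ha, y.2, show ((onePt : Metric.sphere (0:ℂ) 1) : ℂ) = 1 from rfl,
    mul_one, exp_theta]

/-- base set of the trivialization around `b` -/
def bS (b : Metric.sphere (0 : ℂ) 1) : Set (Metric.sphere (0 : ℂ) 1) :=
  {w | ((w : ℂ) / (b : ℂ)) ∈ Complex.slitPlane}

lemma isOpen_bS (b : Metric.sphere (0 : ℂ) 1) : IsOpen (bS b) :=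
  Complex.isOpen_slitPlane.preimage (continuous_subtype_val.div_const _)

lemma mem_bS_self (b : Metric.sphere (0 : ℂ) 1) : b ∈ bS b := by
  show ((b : ℂ) / (b : ℂ)) ∈ Complex.slitPlane
  rw [div_self (sphere_ne_zero b)]
  exact Complex.one_mem_slitPlane

set_option maxHeartbeats 1000000 in
lemma contOn_to (ha : ∀ i, 2 ≤ a i) (b : Metric.sphere (0 : ℂ) 1) :
    ContinuousOn (fun z : Zt n a => actZ n a ha (-(theta b (pbBallMilnorMap n a z))) z)
      (pbBallMilnorMap n a ⁻¹' (bS b)) := by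
  have hθ : ContinuousOn (fun z : Zt n a => theta b (pbBallMilnorMap n a z))
      (pbBallMilnorMap n a ⁻¹' (bS b)) := by
    intro z hz
    have h1 : ContinuousAt
        (fun z : Zt n a => ((pbBallMilnorMap n a z : ℂ)) / (b : ℂ)) z :=
      ((continuous_subtype_val.comp (continuous_milnor n a)).div_const _).continuousAt
    have h2 : ContinuousAt Complex.arg
        (((pbBallMilnorMap n a z : ℂ)) / (b : ℂ)) := Complex.continuousAt_arg hz
    have h3 := ContinuousAt.comp
      (f := fun z : Zt n a => ((pbBallMilnorMap n a z : ℂ)) / (b : ℂ)) h2 h1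
    exact (h3.add continuousAt_const).continuousWithinAt
  exact Continuous.comp_continuousOn
    (f := fun z : Zt n a => ((-(theta b (pbBallMilnorMap n a z)), z) : ℝ × Zt n a))
    (continuous_actZ n a ha) (hθ.neg.prodMk continuousOn_id)

set_option maxHeartbeats 1000000 in
lemma contOn_inv (ha : ∀ i, 2 ≤ a i) (b : Metric.sphere (0 : ℂ) 1) :
    ContinuousOn (fun p : (Metric.sphere (0 : ℂ) 1) × Fib n a => actZ n a ha (theta b p.1) p.2.1)
      ((bS b) ×ˢ (Set.univ : Set (Fib n a))) := by
  have hθ : ContinuousOn (fun p : (Metric.sphere (0 : ℂ) 1) × Fib n a => theta b p.1)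
      ((bS b) ×ˢ (Set.univ : Set (Fib n a))) := by
    intro p hp
    have h1 : ContinuousAt
        (fun p : (Metric.sphere (0 : ℂ) 1) × Fib n a => ((p.1 : ℂ)) / (b : ℂ)) p :=
      ((continuous_subtype_val.comp continuous_fst).div_const _).continuousAt
    have h2 : ContinuousAt Complex.arg (((p.1 : ℂ)) / (b : ℂ)) :=
      Complex.continuousAt_arg hp.1
    have h3 := ContinuousAt.comp
      (f := fun p : (Metric.sphere (0 : ℂ) 1) × Fib n a => ((p.1 : ℂ)) / (b : ℂ)) h2 h1
    exact (h3.add continuousAt_const).continuousWithinAt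
  exact Continuous.comp_continuousOn
    (f := fun p : (Metric.sphere (0 : ℂ) 1) × Fib n a => ((theta b p.1, p.2.1) : ℝ × Zt n a))
    (continuous_actZ n a ha)
    (hθ.prodMk ((continuous_subtype_val.comp continuous_snd).continuousOn))

set_option maxHeartbeats 1000000 in
noncomputable def pbHomeo (ha : ∀ i, 2 ≤ a i) (b : Metric.sphere (0 : ℂ) 1) :
    OpenPartialHomeomorph (Zt n a) ((Metric.sphere (0 : ℂ) 1) × Fib n a) where
  toFun z := (pbBallMilnorMap n a z,
    ⟨actZ n a ha (-(theta b (pbBallMilnorMap n a z))) z, milnor_shift n a ha b z⟩)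
  invFun p := actZ n a ha (theta b p.1) p.2.1
  source := pbBallMilnorMap n a ⁻¹' (bS b)
  target := (bS b) ×ˢ Set.univ
  map_source' z hz := ⟨hz, trivial⟩
  map_target' p hp := by
    show pbBallMilnorMap n a _ ∈ bS b
    rw [milnor_actZ_fib n a ha b p.1 p.2]
    exact hp.1
  left_inv' z _ := by
    show actZ n a ha (theta b (pbBallMilnorMap n a z))
      (actZ n a ha (-(theta b (pbBallMilnorMap n a z))) z) = z
    rw [actZ_add, add_neg_cancel, actZ_zero]
  right_inv' p hp := by
    obtain ⟨w, y⟩ := p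
    have h1 : pbBallMilnorMap n a (actZ n a ha (theta b w) y.1) = w :=
      milnor_actZ_fib n a ha b w y
    refine Prod.ext ?_ ?_
    · exact h1
    · apply Subtype.ext
      show actZ n a ha (-(theta b (pbBallMilnorMap n a (actZ n a ha (theta b w) y.1))))
        (actZ n a ha (theta b w) y.1) = y.1
      rw [h1, actZ_add, neg_add_cancel, actZ_zero]
  open_source := (isOpen_bS b).preimage (continuous_milnor n a)
  open_target := (isOpen_bS b).prod isOpen_univ
  continuousOn_toFun := by
    apply ContinuousOn.prodMk
    · exact (continuous_milnor n a).continuousOn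
    · exact Topology.IsInducing.subtypeVal.continuousOn_iff.mpr (contOn_to n a ha b)
  continuousOn_invFun := contOn_inv n a ha b

noncomputable def pbTriv (ha : ∀ i, 2 ≤ a i) (b : Metric.sphere (0 : ℂ) 1) :
    Bundle.Trivialization (Fib n a) (pbBallMilnorMap n a) where
  toOpenPartialHomeomorph := pbHomeo n a ha b
  baseSet := bS b
  open_baseSet := isOpen_bS b
  source_eq := rfl
  target_eq := rfl
  proj_toFun z _ := rfl

end PBaux

/-- **the fibration on the ball minus the zero locus.** The map
`φ = f/|f| : B ∖ V → S¹` on the open unit ball minus `V = f⁻¹(0)` is the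
projection of a topological fiber bundle: there is a topological space `F`
such that every point of the circle lies in the base set of some
trivialization of `φ` with fiber `F`. -/
theorem phamBrieskorn_global_fibration_ball
    (n : ℕ) (hn : 1 ≤ n) (a : Fin n → ℕ) (ha : ∀ i, 2 ≤ a i) :
    ∃ (F : Type) (tF : TopologicalSpace F),
      ∀ b : Metric.sphere (0 : ℂ) 1,
        ∃ e : @Bundle.Trivialization (Metric.sphere (0 : ℂ) 1) F
            (pbBall n \ pbZeroLocus n a : Set (EuclideanSpace ℂ (Fin n)))
            _ tF _ (pbBallMilnorMap n a),
          b ∈ e.baseSet := by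
  exact ⟨PBaux.Fib n a, inferInstance, fun b =>
    ⟨PBaux.pbTriv n a ha b, PBaux.mem_bS_self b⟩⟩
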